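/- For a strictly lower triangular matrix A ∈ ℝ^{n×n} where row i has at most m nonzero entries, and diagonal D with positive entries, the precision matrix Q = (I − A)^⊤ D^{-1} (I − A) has at most n(2m + 1) + n·m² nonzero entries; in particular the number of nonzeros is O(n m²). -/
import Mathlib


open Matrix Finset

/-- Sparsity of the NNGP precision matrix `Q = (I − A)ᵀ D⁻¹ (I − A)`: if `A` is strictly
lower triangular with at most `m` nonzero entries per row and `D` is diagonal with positive
entries, then `Q` has at most `n(2m+1) + nm²` nonzero entries. -/
theorem stmt8 (n m : ℕ) (A : Matrix (Fin n) (Fin n) ℝ)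
    (hlow : ∀ i j : Fin n, i ≤ j → A i j = 0)
    (hrow : ∀ i : Fin n, (Finset.univ.filter (fun j => A i j ≠ 0)).card ≤ m)
    (d : Fin n → ℝ) (hd : ∀ i, 0 < d i) :
    let Q : Matrix (Fin n) (Fin n) ℝ :=
      (1 - A)ᵀ * Matrix.diagonal (fun i => (d i)⁻¹) * (1 - A)
    ((Finset.univ : Finset (Fin n × Fin n)).filter (fun p => Q p.1 p.2 ≠ 0)).card
      ≤ n * (2 * m + 1) + n * m ^ 2 := by
  intro Q
  set N : Fin n → Finset (Fin n) :=
    fun k => insert k (Finset.univ.filter (fun j => A k j ≠ 0)) with hN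
  have hNcard : ∀ k, (N k).card ≤ m + 1 := by
    intro k
    calc (N k).card ≤ (Finset.univ.filter (fun j => A k j ≠ 0)).card + 1 :=
          Finset.card_insert_le _ _
      _ ≤ m + 1 := by exact Nat.add_le_add_right (hrow k) 1
  have hmem : ∀ k i : Fin n, (1 - A) k i ≠ 0 → i ∈ N k := by
    intro k i h
    rcases eq_or_ne k i with rfl | hne
    · exact Finset.mem_insert_self _ _
    · apply Finset.mem_insert_of_mem
      simp only [Finset.mem_filter, Finset.mem_univ, true_and]
      intro hA
      apply h
      simp [Matrix.sub_apply, Matrix.one_apply, hne, hA]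
  have hsub : (Finset.univ : Finset (Fin n × Fin n)).filter (fun p => Q p.1 p.2 ≠ 0)
      ⊆ Finset.univ.biUnion (fun k => N k ×ˢ N k) := by
    intro p hp
    simp only [Finset.mem_filter, Finset.mem_univ, true_and] at hp
    have hQ : ∃ k, (1 - A) k p.1 ≠ 0 ∧ (1 - A) k p.2 ≠ 0 := by
      by_contra hc
      push_neg at hc
      apply hp
      show ((1 - A)ᵀ * Matrix.diagonal (fun i => (d i)⁻¹) * (1 - A) : Matrix (Fin n) (Fin n) ℝ) p.1 p.2 = 0
      rw [Matrix.mul_assoc, Matrix.mul_apply]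
      apply Finset.sum_eq_zero
      intro k _
      rcases eq_or_ne ((1 - A) k p.1) 0 with h1 | h1
      · simp [Matrix.transpose_apply, h1]
      · have h2 := hc k h1
        rw [Matrix.transpose_apply, Matrix.mul_apply]
        rw [Finset.sum_eq_single k]
        · simp [Matrix.diagonal_apply_eq, h2]
        · intro b _ hb
          simp [Matrix.diagonal_apply_ne' _ hb]
        · simp
    obtain ⟨k, h1, h2⟩ := hQ
    simp only [Finset.mem_biUnion, Finset.mem_univ, true_and]
    exact ⟨k, Finset.mem_product.mpr ⟨hmem k p.1 h1, hmem k p.2 h2⟩⟩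
  calc ((Finset.univ : Finset (Fin n × Fin n)).filter (fun p => Q p.1 p.2 ≠ 0)).card
      ≤ (Finset.univ.biUnion (fun k => N k ×ˢ N k)).card := Finset.card_le_card hsub
    _ ≤ ∑ k : Fin n, (N k ×ˢ N k).card := Finset.card_biUnion_le
    _ ≤ ∑ _k : Fin n, (m + 1) * (m + 1) := by
        apply Finset.sum_le_sum
        intro k _
        rw [Finset.card_product]
        exact Nat.mul_le_mul (hNcard k) (hNcard k)
    _ = n * ((m + 1) * (m + 1)) := by simp [Finset.sum_const, mul_comm]
    _ = n * (2 * m + 1) + n * m ^ 2 := by ring
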